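/- If A is a centrally essential ring, then the polynomial ring A[x] is centrally essential. -/
import Mathlib


/-- A ring is *centrally essential* if its center is an essential submodule over the
center, i.e. every nonzero element has a nonzero central multiple by a central element. -/
def IsCentrallyEssential (A : Type*) [Ring A] : Prop :=
  ∀ a : A, a ≠ 0 → ∃ z ∈ Set.center A, a * z ≠ 0 ∧ a * z ∈ Set.center A

/-- A right ideal (submodule of `A` as a right module over itself) is a two-sided ideal
if it is closed under left multiplication. -/
def IsTwoSidedRightIdeal {A : Type*} [Ring A] (I : Submodule Aᵐᵒᵖ A) : Prop :=
  ∀ a x : A, x ∈ I → a * x ∈ I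

/-- A ring is right quasi-invariant if every maximal right ideal is two-sided. -/
def IsRightQuasiInvariant (A : Type*) [Ring A] : Prop :=
  ∀ M : Submodule Aᵐᵒᵖ A, IsCoatom M → IsTwoSidedRightIdeal M

open Polynomial

private lemma aux_C_mem_center {A : Type*} [Ring A] {c : A} (hc : c ∈ Set.center A) :
    (C c : A[X]) ∈ Set.center A[X] := by
  rw [Semigroup.mem_center_iff]
  intro p
  ext n
  rw [coeff_mul_C, coeff_C_mul, Semigroup.mem_center_iff.mp hc (p.coeff n)]

private lemma aux_Xpow_mem_center {A : Type*} [Ring A] (n : ℕ) :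
    (X ^ n : A[X]) ∈ Set.center A[X] :=
  Semigroup.mem_center_iff.mpr fun _ => X_pow_mul.symm

private lemma aux_key {A : Type*} [Ring A] (h : IsCentrallyEssential A) :
    ∀ n : ℕ, ∀ p : A[X], p.natDegree ≤ n → p ≠ 0 →
      ∃ c ∈ Set.center A, p * C c ≠ 0 ∧ p * C c ∈ Set.center A[X] := by
  intro n
  induction n with
  | zero =>
    intro p hd hp
    have hp0 : p = C (p.coeff 0) := eq_C_of_natDegree_eq_zero (Nat.le_zero.mp hd)
    have ha : p.coeff 0 ≠ 0 := fun h0 => hp (by rw [hp0, h0, map_zero])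
    obtain ⟨z, hz, hne, hc⟩ := h _ ha
    refine ⟨z, hz, ?_, ?_⟩
    · rw [hp0, ← C_mul, Ne, C_eq_zero]
      exact hne
    · rw [hp0, ← C_mul]
      exact aux_C_mem_center hc
  | succ n ih =>
    intro p hd hp
    obtain ⟨z, hz, haz, hazc⟩ := h p.leadingCoeff (leadingCoeff_ne_zero.mpr hp)
    set q := p * C z with hq_def
    have hq : q.coeff p.natDegree = p.leadingCoeff * z := by
      rw [hq_def, coeff_mul_C, coeff_natDegree]
    have hqne : q ≠ 0 := by
      intro h0
      rw [h0, coeff_zero] at hq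
      exact haz hq.symm
    have hqd_le : q.natDegree ≤ p.natDegree := by
      simpa using natDegree_mul_le (p := p) (q := C z)
    have hqd : q.natDegree = p.natDegree :=
      le_antisymm hqd_le (le_natDegree_of_ne_zero (hq ▸ haz))
    have hlead : q.leadingCoeff = p.leadingCoeff * z := by
      rw [leadingCoeff, hqd, hq]
    by_cases he : q.eraseLead = 0
    · have hq_eq : q = C (p.leadingCoeff * z) * X ^ q.natDegree := by
        conv_lhs => rw [← eraseLead_add_C_mul_X_pow q]
        rw [he, zero_add, hlead]
      refine ⟨z, hz, hqne, ?_⟩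
      show q ∈ Set.center A[X]
      rw [hq_eq]
      exact Set.mul_mem_center (aux_C_mem_center hazc) (aux_Xpow_mem_center _)
    · have hlt : q.eraseLead.natDegree < q.natDegree :=
        (eraseLead_natDegree_lt_or_eraseLead_eq_zero q).resolve_right he
      have hle : q.eraseLead.natDegree ≤ n := by omega
      obtain ⟨c, hc, hne, hcen⟩ := ih q.eraseLead hle he
      have key_eq : p * C (z * c) =
          q.eraseLead * C c + C (p.leadingCoeff * z) * X ^ q.natDegree * C c := by
        rw [C_mul, ← mul_assoc, ← hq_def]
        conv_lhs => rw [← eraseLead_add_C_mul_X_pow q, hlead]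
        rw [add_mul]
      refine ⟨z * c, Set.mul_mem_center hz hc, ?_, ?_⟩
      · rw [key_eq]
        intro h0
        have hm : (q.eraseLead * C c).natDegree < q.natDegree :=
          lt_of_le_of_lt (by simpa using natDegree_mul_le (p := q.eraseLead) (q := C c)) hlt
        have h1 := congrArg (fun r : A[X] => r.coeff (q.eraseLead * C c).natDegree) h0
        simp only [coeff_add, coeff_zero, coeff_mul_C, coeff_C_mul, coeff_X_pow,
          if_neg hm.ne, mul_zero, zero_mul, add_zero] at h1
        rw [← coeff_mul_C, coeff_natDegree] at h1
        exact hne (leadingCoeff_eq_zero.mp h1)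
      · rw [key_eq]
        exact Set.add_mem_center hcen
          (Set.mul_mem_center
            (Set.mul_mem_center (aux_C_mem_center hazc) (aux_Xpow_mem_center _))
            (aux_C_mem_center hc))

/-- If `A` is centrally essential, then the polynomial ring `A[x]` is centrally
essential. -/
theorem stmt_10 (A : Type*) [Ring A] (h : IsCentrallyEssential A) :
    IsCentrallyEssential (Polynomial A) := by
  intro p hp
  obtain ⟨c, hc, hne, hcen⟩ := aux_key h p.natDegree p le_rfl hp
  exact ⟨C c, aux_C_mem_center hc, hne, hcen⟩
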